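/- Let $X_1,\ldots,X_n$ be $\{0,1\}$-valued random variables and let $0 < \alpha < \beta < 1$. Suppose $k = \frac{\beta-\alpha}{1-\alpha} n$ is a positive integer, and that for every subset $S \subseteq \{1,\ldots,n\}$ with $|S| = k$ we have $\Pr(\forall i \in S, X_i = 1) \le \alpha^k$. Then $\Pr\left(\sum_{i=1}^n X_i \ge \beta n\right) \le e^{-D(\beta\|\alpha) n}$, where $D(\beta\|\alpha) = \beta \ln(\beta/\alpha) + (1-\beta)\ln((1-\beta)/(1-\alpha))$ is the Kullback-Leibler divergence between Bernoulli($\beta$) and Bernoulli($\alpha$). -/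

import Mathlib

open MeasureTheory ProbabilityTheory Finset
open scoped ENNReal

namespace Stmt1Aux

lemma integral_log_sub (c K : ℝ) (hK : 0 ≤ K) (h : 0 < c - K) :
    ∫ x in (0:ℝ)..K, Real.log (c - x)
      = c * Real.log c - (c - K) * Real.log (c - K) - K := by
  rw [intervalIntegral.integral_comp_sub_left (fun u => Real.log u) c]
  rw [integral_log]
  ring_nf

-- full key real inequality
lemma key_ineq (n k : ℕ) (α β : ℝ) (hα : 0 < α) (hαβ : α < β) (hβ1 : β < 1)
    (hk0 : 0 < k) (hk : (k : ℝ) = (β - α) / (1 - α) * n) :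
    (n.choose k : ℝ) * α ^ k ≤ ((⌈β * (n:ℝ)⌉₊).choose k : ℝ) *
      Real.exp (-(β * Real.log (β / α) + (1 - β) * Real.log ((1 - β) / (1 - α))) * n) := by
  have h1α : 0 < 1 - α := by linarith
  have h1β : 0 < 1 - β := by linarith
  have hβ0 : 0 < β := lt_trans hα hαβ
  have hn : 0 < (n : ℝ) := by
    rcases Nat.eq_zero_or_pos n with h | h
    · exfalso
      have : (k : ℝ) = 0 := by rw [hk, h]; push_cast; ring
      have : k = 0 := by exact_mod_cast this
      omega
    · exact_mod_cast h
  have hkβn : (k : ℝ) < β * n := by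
    rw [hk]
    apply mul_lt_mul_of_pos_right _ hn
    rw [div_lt_iff₀ h1α]
    nlinarith
  have hknr : (k : ℝ) < n := lt_trans hkβn (by nlinarith)
  have hkn : k ≤ n := by exact_mod_cast hknr.le
  have hnk : (n : ℝ) - k = (1 - β) / (1 - α) * n := by
    rw [hk]; field_simp; ring
  have hbk : β * (n : ℝ) - k = α * ((1 - β) / (1 - α) * n) := by
    rw [hk]; field_simp; ring
  set m := ⌈β * (n:ℝ)⌉₊ with hm
  have hβm : β * (n:ℝ) ≤ m := Nat.le_ceil _
  have hkm : k ≤ m := (Nat.lt_ceil.mpr hkβn).le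
  set D : ℝ := β * Real.log (β / α) + (1 - β) * Real.log ((1 - β) / (1 - α)) with hD
  -- descFactorial products
  have hprod : ∀ N : ℕ, k ≤ N → (N.descFactorial k : ℝ) = ∏ i ∈ Finset.range k, ((N : ℝ) - i) := by
    intro N hN
    rw [Nat.descFactorial_eq_prod_range, Nat.cast_prod]
    exact Finset.prod_congr rfl fun i hi =>
      Nat.cast_sub (((Finset.mem_range.1 hi).trans_le hN).le)
  -- positivity facts for factors
  have hpos_n : ∀ i ∈ Finset.range k, (0:ℝ) < (n:ℝ) - i := by
    intro i hi
    have : (i:ℝ) < k := by exact_mod_cast Finset.mem_range.1 hi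
    linarith
  have hpos_b : ∀ i ∈ Finset.range k, (0:ℝ) < β * (n:ℝ) - i := by
    intro i hi
    have : (i:ℝ) < k := by exact_mod_cast Finset.mem_range.1 hi
    linarith
  -- core: ∏ (n - i) * α^k ≤ ∏ (βn - i) * exp(-D n)
  have core : (∏ i ∈ Finset.range k, ((n:ℝ) - i)) * α ^ k
      ≤ (∏ i ∈ Finset.range k, (β * (n:ℝ) - i)) * Real.exp (-D * n) := by
    have hPn : (0:ℝ) < ∏ i ∈ Finset.range k, ((n:ℝ) - i) := Finset.prod_pos hpos_n
    have hPb : (0:ℝ) < ∏ i ∈ Finset.range k, (β * (n:ℝ) - i) := Finset.prod_pos hpos_b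
    rw [← Real.log_le_log_iff (by positivity) (by positivity)]
    rw [Real.log_mul (ne_of_gt hPn) (by positivity),
        Real.log_mul (ne_of_gt hPb) (Real.exp_ne_zero _),
        Real.log_prod (fun i hi => ne_of_gt (hpos_n i hi)),
        Real.log_prod (fun i hi => ne_of_gt (hpos_b i hi)),
        Real.log_pow, Real.log_exp]
    -- reduce to sum/integral comparison
    have hmono : MonotoneOn (fun x : ℝ => Real.log ((n:ℝ) - x) - Real.log (β * n - x))
        (Set.Icc (0:ℝ) (0 + k)) := by
      rintro x ⟨hx0, hxk⟩ y ⟨hy0, hyk⟩ hxy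
      simp only [zero_add] at hxk hyk
      have hnx : (0:ℝ) < (n:ℝ) - x := by linarith
      have hny : (0:ℝ) < (n:ℝ) - y := by linarith
      have hbx : (0:ℝ) < β * (n:ℝ) - x := by linarith
      have hby : (0:ℝ) < β * (n:ℝ) - y := by linarith
      rw [sub_le_sub_iff, ← Real.log_mul (ne_of_gt hnx) (ne_of_gt hby),
          ← Real.log_mul (ne_of_gt hny) (ne_of_gt hbx)]
      apply Real.log_le_log (by positivity)
      nlinarith [mul_nonneg (mul_nonneg h1β.le hn.le) (sub_nonneg.2 hxy)]
    have hsum := MonotoneOn.sum_le_integral hmono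
    simp only [zero_add] at hsum
    have hint1 : IntervalIntegrable (fun x : ℝ => Real.log ((n:ℝ) - x)) MeasureTheory.volume 0 k := by
      apply ContinuousOn.intervalIntegrable
      apply ContinuousOn.log ((continuous_const.sub continuous_id).continuousOn)
      intro x hx
      rw [Set.uIcc_of_le (by positivity : (0:ℝ) ≤ (k:ℝ))] at hx
      have h2 := hx.2
      apply ne_of_gt
      simp only [Pi.sub_apply, id_eq]
      linarith
    have hint2 : IntervalIntegrable (fun x : ℝ => Real.log (β * (n:ℝ) - x)) MeasureTheory.volume 0 k := by
      apply ContinuousOn.intervalIntegrable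
      apply ContinuousOn.log ((continuous_const.sub continuous_id).continuousOn)
      intro x hx
      rw [Set.uIcc_of_le (by positivity : (0:ℝ) ≤ (k:ℝ))] at hx
      have h2 := hx.2
      apply ne_of_gt
      simp only [Pi.sub_apply, id_eq]
      linarith
    rw [intervalIntegral.integral_sub hint1 hint2] at hsum
    rw [integral_log_sub _ _ (by positivity) (by linarith),
        integral_log_sub _ _ (by positivity) (by linarith)] at hsum
    have hval : (n:ℝ) * Real.log n - ((n:ℝ) - k) * Real.log ((n:ℝ) - k) - k -
        (β * n * Real.log (β * n) - (β * n - k) * Real.log (β * n - k) - k)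
        = -(k:ℝ) * Real.log α - D * n := by
      rw [hnk, hbk, hD]
      rw [Real.log_mul (ne_of_gt hα) (by positivity),
          Real.log_mul (by positivity : ((1-β)/(1-α) : ℝ) ≠ 0) (ne_of_gt hn),
          Real.log_mul (ne_of_gt hβ0) (ne_of_gt hn),
          Real.log_div (ne_of_gt hβ0) (ne_of_gt hα)]
      rw [hk]
      field_simp
      ring
    rw [hval] at hsum
    rw [Finset.sum_sub_distrib] at hsum
    push_cast
    linarith
  -- put everything together
  have hE : (0:ℝ) < Real.exp (-D * n) := Real.exp_pos _
  -- choose to descFactorial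
  have hc1 : (n.choose k : ℝ) = (n.descFactorial k : ℝ) / (k.factorial : ℝ) := by
    rw [Nat.descFactorial_eq_factorial_mul_choose]
    push_cast
    field_simp
  have hc2 : (m.choose k : ℝ) = (m.descFactorial k : ℝ) / (k.factorial : ℝ) := by
    rw [Nat.descFactorial_eq_factorial_mul_choose]
    push_cast
    field_simp
  rw [hc1, hc2, hprod n hkn, hprod m hkm]
  rw [div_mul_eq_mul_div, div_mul_eq_mul_div, div_le_div_iff_of_pos_right (by positivity)]
  calc (∏ i ∈ Finset.range k, ((n:ℝ) - i)) * α ^ k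
      ≤ (∏ i ∈ Finset.range k, (β * (n:ℝ) - i)) * Real.exp (-D * n) := core
    _ ≤ (∏ i ∈ Finset.range k, ((m:ℝ) - i)) * Real.exp (-D * n) := by
        apply mul_le_mul_of_nonneg_right _ hE.le
        apply Finset.prod_le_prod (fun i hi => (hpos_b i hi).le)
        intro i hi
        have : (i:ℝ) < k := by exact_mod_cast Finset.mem_range.1 hi
        linarith

end Stmt1Aux

open Stmt1Aux

theorem stmt_1 {Ω : Type*} [MeasureSpace Ω] [IsProbabilityMeasure (ℙ : Measure Ω)]
    (n : ℕ) (X : Fin n → Ω → ℝ) (hX : ∀ i, Measurable (X i))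
    (h01 : ∀ i ω, X i ω = 0 ∨ X i ω = 1)
    (α β : ℝ) (hα : 0 < α) (hαβ : α < β) (hβ1 : β < 1)
    (k : ℕ) (hk0 : 0 < k) (hk : (k : ℝ) = (β - α) / (1 - α) * n)
    (hS : ∀ S ∈ Finset.powersetCard k (Finset.univ : Finset (Fin n)),
      ℙ {ω | ∀ i ∈ S, X i ω = 1} ≤ ENNReal.ofReal (α ^ k)) :
    ℙ {ω | β * n ≤ ∑ i, X i ω} ≤
      ENNReal.ofReal
        (Real.exp (-(β * Real.log (β / α) + (1 - β) * Real.log ((1 - β) / (1 - α))) * n)) := by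
  classical
  set A := {ω : Ω | β * n ≤ ∑ i, X i ω} with hAdef
  have hAmeas : MeasurableSet A :=
    measurableSet_le measurable_const (Finset.measurable_sum _ fun i _ => hX i)
  set B : Finset (Fin n) → Set Ω := fun S => {ω | ∀ i ∈ S, X i ω = 1} with hBdef
  have hBmeas : ∀ S, MeasurableSet (B S) := by
    intro S
    have : B S = ⋂ i ∈ S, X i ⁻¹' {1} := by
      ext ω; simp [hBdef]
    rw [this]
    exact MeasurableSet.biInter (Set.to_countable _) fun i _ =>
      (hX i) (measurableSet_singleton 1)
  set m := ⌈β * (n:ℝ)⌉₊ with hm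
  set M := m.choose k with hM
  set 𝒮 := Finset.powersetCard k (Finset.univ : Finset (Fin n)) with h𝒮
  -- counting step
  have step : (M : ℝ≥0∞) * ℙ A ≤ ∑ S ∈ 𝒮, ℙ (A ∩ B S) := by
    have point : ∀ ω, A.indicator (fun _ => (M : ℝ≥0∞)) ω
        ≤ ∑ S ∈ 𝒮, (A ∩ B S).indicator (fun _ => (1 : ℝ≥0∞)) ω := by
      intro ω
      by_cases hω : ω ∈ A
      · rw [Set.indicator_of_mem hω]
        have : ∑ S ∈ 𝒮, (A ∩ B S).indicator (fun _ => (1 : ℝ≥0∞)) ω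
            = ∑ S ∈ 𝒮, if ω ∈ B S then (1 : ℝ≥0∞) else 0 := by
          refine Finset.sum_congr rfl fun S _ => ?_
          simp [Set.indicator_apply, Set.mem_inter_iff, hω]
        rw [this, Finset.sum_boole]
        set T := Finset.univ.filter (fun i => X i ω = 1) with hT
        have hfil : 𝒮.filter (fun S => ω ∈ B S) = Finset.powersetCard k T := by
          ext S
          simp only [h𝒮, Finset.mem_filter, Finset.mem_powersetCard, hBdef, Set.mem_setOf_eq,
            hT, Finset.subset_iff, Finset.mem_filter, Finset.mem_univ, true_and]
          tauto
        rw [hfil, Finset.card_powersetCard]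
        have hsum : ∑ i, X i ω = (T.card : ℝ) := by
          rw [hT, Finset.card_filter]
          push_cast
          refine Finset.sum_congr rfl fun i _ => ?_
          rcases h01 i ω with h | h <;> simp [h]
        have hβT : β * n ≤ (T.card : ℝ) := by
          rw [← hsum]; exact hω
        have hmT : m ≤ T.card := Nat.ceil_le.mpr hβT
        exact_mod_cast Nat.choose_le_choose k hmT
      · rw [Set.indicator_of_notMem hω]
        exact zero_le
    calc (M : ℝ≥0∞) * ℙ A = ∫⁻ ω, A.indicator (fun _ => (M : ℝ≥0∞)) ω ∂ℙ := by
          rw [lintegral_indicator_const hAmeas]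
      _ ≤ ∫⁻ ω, ∑ S ∈ 𝒮, (A ∩ B S).indicator (fun _ => (1 : ℝ≥0∞)) ω ∂ℙ :=
          lintegral_mono point
      _ = ∑ S ∈ 𝒮, ℙ (A ∩ B S) := by
          rw [lintegral_finset_sum _ fun S _ =>
            measurable_const.indicator (hAmeas.inter (hBmeas S))]
          refine Finset.sum_congr rfl fun S _ => ?_
          rw [lintegral_indicator_const (hAmeas.inter (hBmeas S)), one_mul]
  have step2 : ∑ S ∈ 𝒮, ℙ (A ∩ B S) ≤ (n.choose k : ℝ≥0∞) * ENNReal.ofReal (α ^ k) := by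
    calc ∑ S ∈ 𝒮, ℙ (A ∩ B S) ≤ ∑ S ∈ 𝒮, ℙ (B S) :=
          Finset.sum_le_sum fun S _ => measure_mono Set.inter_subset_right
      _ ≤ ∑ _S ∈ 𝒮, ENNReal.ofReal (α ^ k) := Finset.sum_le_sum fun S hSmem => hS S hSmem
      _ = (𝒮.card : ℝ≥0∞) * ENNReal.ofReal (α ^ k) := by
          rw [Finset.sum_const, nsmul_eq_mul]
      _ = (n.choose k : ℝ≥0∞) * ENNReal.ofReal (α ^ k) := by
          rw [h𝒮, Finset.card_powersetCard, Finset.card_univ, Fintype.card_fin]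
  -- basic facts
  have h1α : 0 < 1 - α := by linarith
  have hn : 0 < (n : ℝ) := by
    rcases Nat.eq_zero_or_pos n with h | h
    · exfalso
      have : (k : ℝ) = 0 := by rw [hk, h]; push_cast; ring
      have : k = 0 := by exact_mod_cast this
      omega
    · exact_mod_cast h
  have hkβn : (k : ℝ) < β * n := by
    rw [hk]
    apply mul_lt_mul_of_pos_right _ hn
    rw [div_lt_iff₀ h1α]
    nlinarith
  have hkm : k ≤ m := (Nat.lt_ceil.mpr hkβn).le
  have hM0 : (M : ℝ≥0∞) ≠ 0 := by
    simp only [hM, Ne, Nat.cast_eq_zero]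
    exact (Nat.choose_pos hkm).ne'
  have hMtop : (M : ℝ≥0∞) ≠ ⊤ := ENNReal.natCast_ne_top M
  set E := Real.exp (-(β * Real.log (β / α) + (1 - β) * Real.log ((1 - β) / (1 - α))) * n)
    with hE
  have key := key_ineq n k α β hα hαβ hβ1 hk0 hk
  have final : (M : ℝ≥0∞) * ℙ A ≤ (M : ℝ≥0∞) * ENNReal.ofReal E := by
    calc (M : ℝ≥0∞) * ℙ A ≤ (n.choose k : ℝ≥0∞) * ENNReal.ofReal (α ^ k) :=
          le_trans step step2
      _ = ENNReal.ofReal ((n.choose k : ℝ) * α ^ k) := by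
          rw [ENNReal.ofReal_mul (by positivity), ENNReal.ofReal_natCast]
      _ ≤ ENNReal.ofReal ((M : ℝ) * E) := ENNReal.ofReal_le_ofReal key
      _ = (M : ℝ≥0∞) * ENNReal.ofReal E := by
          rw [ENNReal.ofReal_mul (by positivity), ENNReal.ofReal_natCast]
  exact (ENNReal.mul_le_mul_iff_right hM0 hMtop).mp final
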